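/- If $I_1$ is an $n_1$-absorbing ideal and $I_2$ is an $n_2$-absorbing ideal of a commutative ring $R$, then $I_1 \cap I_2$ is an $(n_1 + n_2)$-absorbing ideal of $R$. -/

import Mathlib

open Ideal Finset MvPolynomial

/-- `I` is an `N`-absorbing ideal: whenever a product of `N+1` elements lies in `I`,
the product of some `N` of them (omitting one factor) lies in `I`. -/
def IsNAbsorbing {R : Type*} [CommRing R] (I : Ideal R) (N : ℕ) : Prop :=
  ∀ x : Fin (N + 1) → R, (∏ i, x i) ∈ I →
    ∃ j, (∏ i ∈ Finset.univ.erase j, x i) ∈ I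

/-- `ω(I)`: the least `N` such that `I` is `N`-absorbing. -/
noncomputable def omegaAbs {R : Type*} [CommRing R] (I : Ideal R) : ℕ :=
  sInf {N | IsNAbsorbing I N}

lemma prod_erase_univ_fin {M : Type*} [CommMonoid M] {n : ℕ} (j : Fin (n + 1))
    (g : Fin (n + 1) → M) :
    ∏ i ∈ Finset.univ.erase j, g i = ∏ i : Fin n, g (j.succAbove i) := by
  rw [show Finset.univ.erase j = Finset.image j.succAbove Finset.univ from by
    rw [Fin.image_succAbove_univ, Finset.compl_singleton]]
  rw [Finset.prod_image (fun a _ b _ hab => Fin.succAbove_right_injective hab)]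

lemma exists_subset_card_prod_mem {R : Type*} [CommRing R] {I : Ideal R} {n : ℕ}
    (h : IsNAbsorbing I n) {ι : Type*} [DecidableEq ι] (s : Finset ι) (x : ι → R)
    (hn : n ≤ s.card) (hs : (∏ i ∈ s, x i) ∈ I) :
    ∃ t, t ⊆ s ∧ t.card = n ∧ (∏ i ∈ t, x i) ∈ I := by
  obtain ⟨k, hk⟩ : ∃ k, s.card = n + k := ⟨s.card - n, by omega⟩
  clear hn
  induction k generalizing s with
  | zero => exact ⟨s, Finset.Subset.refl s, by omega, hs⟩
  | succ k ih =>
    obtain ⟨u, hus, huc⟩ := Finset.exists_subset_card_eq (s := s) (n := n) (by omega)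
    let e : { a // a ∈ u } ≃ Fin n := u.equivFin.trans (finCongr huc)
    let f : Fin n → ι := fun i => (e.symm i : ι)
    have hfu : ∀ i, f i ∈ u := fun i => (e.symm i).2
    have hfinj : Function.Injective f := fun a b hab =>
      e.symm.injective (Subtype.ext hab)
    have himg : Finset.image f Finset.univ = u := by
      apply Finset.eq_of_subset_of_card_le
      · intro a ha
        simp only [Finset.mem_image] at ha
        obtain ⟨i, _, rfl⟩ := ha
        exact hfu i
      · rw [Finset.card_image_of_injective _ hfinj, Finset.card_univ, Fintype.card_fin, huc]
    have hprodu : ∏ i : Fin n, x (f i) = ∏ a ∈ u, x a := by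
      rw [← himg, Finset.prod_image (fun a _ b _ hab => hfinj hab)]
    set y : Fin (n + 1) → R := Fin.snoc (fun i => x (f i)) (∏ i ∈ s \ u, x i) with hy_def
    have hy : ∏ i, y i = ∏ i ∈ s, x i := by
      rw [Fin.prod_univ_castSucc]
      simp only [hy_def, Fin.snoc_castSucc, Fin.snoc_last]
      rw [hprodu, mul_comm, Finset.prod_sdiff hus]
    obtain ⟨j, hj⟩ := h y (by rw [hy]; exact hs)
    induction j using Fin.lastCases with
    | last =>
      rw [prod_erase_univ_fin] at hj
      simp only [Fin.succAbove_last, hy_def, Fin.snoc_castSucc] at hj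
      rw [hprodu] at hj
      exact ⟨u, hus, huc, hj⟩
    | cast j₀ =>
      set a := f j₀ with ha_def
      have hau : a ∈ u := hfu j₀
      have has : a ∈ s := hus hau
      have hsplit : Finset.univ.erase (Fin.castSucc j₀) =
          insert (Fin.last n) (Finset.image Fin.castSucc (Finset.univ.erase j₀)) := by
        ext b
        induction b using Fin.lastCases with
        | last => simp [Fin.ext_iff, (Fin.castSucc_lt_last j₀).ne']
        | cast b₀ =>
          simp [Fin.castSucc_inj, (Fin.castSucc_lt_last b₀).ne,
            Fin.castSucc_injective n |>.eq_iff]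
      have hnotmem : Fin.last n ∉ Finset.image Fin.castSucc (Finset.univ.erase j₀) := by
        simp only [Finset.mem_image, not_exists]
        rintro b ⟨_, hb⟩
        exact (Fin.castSucc_lt_last b).ne hb
      rw [hsplit, Finset.prod_insert hnotmem,
        Finset.prod_image (fun p _ q _ hpq => Fin.castSucc_injective n hpq)] at hj
      simp only [hy_def, Fin.snoc_castSucc, Fin.snoc_last] at hj
      have himg' : Finset.image f (Finset.univ.erase j₀) = u.erase a := by
        rw [← himg]
        rw [Finset.erase_eq, Finset.erase_eq, ← Finset.image_singleton f,
          ← Finset.image_sdiff _ _ hfinj]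
      have hprodu' : ∏ i ∈ Finset.univ.erase j₀, x (f i) = ∏ b ∈ u.erase a, x b := by
        rw [← himg', Finset.prod_image (fun p _ q _ hpq => hfinj hpq)]
      rw [hprodu'] at hj
      have hsub : u.erase a ⊆ s.erase a := Finset.erase_subset_erase a hus
      have hsdiff : (s.erase a) \ (u.erase a) = s \ u := by
        ext b
        simp only [Finset.mem_sdiff, Finset.mem_erase]
        constructor
        · rintro ⟨⟨hba, hbs⟩, hnb⟩
          refine ⟨hbs, fun hbu => hnb ⟨hba, hbu⟩⟩
        · rintro ⟨hbs, hnb⟩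
          exact ⟨⟨fun hba => hnb (hba ▸ hau), hbs⟩, fun hb => hnb hb.2⟩
      have hprodsa : (∏ i ∈ s.erase a, x i) ∈ I := by
        rw [← Finset.prod_sdiff hsub, hsdiff]
        exact hj
      obtain ⟨t, hts, htc, htI⟩ := ih (s.erase a) hprodsa
        (by rw [Finset.card_erase_of_mem has]; omega)
      exact ⟨t, hts.trans (Finset.erase_subset a s), htc, htI⟩

theorem inter_isNAbsorbing {R : Type*} [CommRing R] (I₁ I₂ : Ideal R) (n₁ n₂ : ℕ)
    (h₁ : IsNAbsorbing I₁ n₁) (h₂ : IsNAbsorbing I₂ n₂) :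
    IsNAbsorbing (I₁ ⊓ I₂) (n₁ + n₂) := by
  intro x hx
  rw [Submodule.mem_inf] at hx
  obtain ⟨A, _, hAc, hA⟩ := exists_subset_card_prod_mem h₁ (Finset.univ : Finset (Fin (n₁ + n₂ + 1))) x
    (by simp; omega) hx.1
  obtain ⟨B, _, hBc, hB⟩ := exists_subset_card_prod_mem h₂ (Finset.univ : Finset (Fin (n₁ + n₂ + 1))) x
    (by simp; omega) hx.2
  have hcard : (A ∪ B).card < (Finset.univ : Finset (Fin (n₁ + n₂ + 1))).card := by
    calc (A ∪ B).card ≤ A.card + B.card := Finset.card_union_le A B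
    _ < (Finset.univ : Finset (Fin (n₁ + n₂ + 1))).card := by
        rw [hAc, hBc, Finset.card_univ, Fintype.card_fin]; omega
  obtain ⟨j, hj⟩ : ∃ j, j ∉ A ∪ B := by
    by_contra hcon
    push_neg at hcon
    have : Finset.univ ⊆ A ∪ B := fun b _ => hcon b
    exact absurd (Finset.card_le_card this) (by omega)
  refine ⟨j, ?_, ?_⟩
  · have hAe : A ⊆ Finset.univ.erase j := fun b hb =>
      Finset.mem_erase.mpr ⟨fun hbj => hj (hbj ▸ Finset.mem_union_left B hb),
        Finset.mem_univ b⟩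
    rw [← Finset.prod_sdiff hAe]
    exact Ideal.mul_mem_left _ _ hA
  · have hBe : B ⊆ Finset.univ.erase j := fun b hb =>
      Finset.mem_erase.mpr ⟨fun hbj => hj (hbj ▸ Finset.mem_union_right A hb),
        Finset.mem_univ b⟩
    rw [← Finset.prod_sdiff hBe]
    exact Ideal.mul_mem_left _ _ hB
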